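/- In the braid group B_n (n ≥ 2), for all indices 1 ≤ p < q < r < s ≤ n, the pure braid generators satisfy the commutation relations [a_{pq}, a_{rs}] = 1 and [a_{ps}, a_{qr}] = 1. -/
import Mathlib

/-- The braid relations on generators `σ_1, …, σ_{n-1}` (generator `i : Fin (n-1)`
corresponds to `σ_{i+1}`): `σ_i σ_{i+1} σ_i = σ_{i+1} σ_i σ_{i+1}` and
`σ_i σ_j = σ_j σ_i` for `|i - j| ≥ 2`. -/
def braidRels (n : ℕ) : Set (FreeGroup (Fin (n - 1))) :=
  { r | (∃ i j : Fin (n - 1), (i : ℕ) + 1 = (j : ℕ) ∧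
          r = FreeGroup.of i * FreeGroup.of j * FreeGroup.of i *
              (FreeGroup.of j * FreeGroup.of i * FreeGroup.of j)⁻¹) ∨
        (∃ i j : Fin (n - 1), (i : ℕ) + 2 ≤ (j : ℕ) ∧
          r = FreeGroup.of i * FreeGroup.of j * (FreeGroup.of j * FreeGroup.of i)⁻¹) }

/-- The braid group `B_n`, presented on `σ_1, …, σ_{n-1}` with the braid relations. -/
abbrev BraidGroup (n : ℕ) := PresentedGroup (braidRels n)

/-- The braid generator `σ_k` (`1 ≤ k ≤ n-1`, 1-based); junk value `1` out of range. -/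
def braidSigma (n k : ℕ) : BraidGroup n :=
  if h : k - 1 < n - 1 then PresentedGroup.of (⟨k - 1, h⟩ : Fin (n - 1)) else 1

/-- The pure braid generator
`a_{ij} = (σ_{j-1} σ_{j-2} ⋯ σ_{i+1}) σ_i² (σ_{j-1} σ_{j-2} ⋯ σ_{i+1})⁻¹`. -/
def braidA (n i j : ℕ) : BraidGroup n :=
  ((List.range (j - 1 - i)).map (fun t => braidSigma n (j - 1 - t))).prod *
    (braidSigma n i) ^ 2 *
    (((List.range (j - 1 - i)).map (fun t => braidSigma n (j - 1 - t))).prod)⁻¹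

namespace BraidAux

/-- `C n a b = σ_{b-1} σ_{b-2} ⋯ σ_a` (empty product if `b ≤ a`). -/
def C (n a b : ℕ) : BraidGroup n :=
  ((List.range (b - a)).map (fun t => braidSigma n (b - 1 - t))).prod

lemma rel_one {n : ℕ} {r : FreeGroup (Fin (n - 1))} (h : r ∈ braidRels n) :
    PresentedGroup.mk (braidRels n) r = 1 := by
  have : r ∈ Subgroup.normalClosure (braidRels n) := Subgroup.subset_normalClosure h
  exact (QuotientGroup.eq_one_iff r).mpr this

lemma sigma_comm (n k l : ℕ) (hk : 1 ≤ k) (hkl : k + 2 ≤ l) :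
    Commute (braidSigma n k) (braidSigma n l) := by
  unfold braidSigma
  split_ifs with h1 h2 h2
  · -- both in range
    have hmem : FreeGroup.of (⟨k - 1, h1⟩ : Fin (n - 1)) * FreeGroup.of (⟨l - 1, h2⟩ : Fin (n-1)) *
        (FreeGroup.of (⟨l - 1, h2⟩ : Fin (n-1)) * FreeGroup.of (⟨k - 1, h1⟩ : Fin (n-1)))⁻¹
        ∈ braidRels n := Or.inr ⟨_, _, by simp; omega, rfl⟩
    have h := rel_one hmem
    simp only [map_mul, map_inv] at h
    have h' := mul_inv_eq_one.mp h
    exact h'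
  · exact Commute.one_right _
  · exact Commute.one_left _
  · exact Commute.one_right _

lemma sigma_braid (n k : ℕ) (hk : 1 ≤ k) (hk2 : k + 1 ≤ n - 1) :
    braidSigma n k * braidSigma n (k+1) * braidSigma n k =
    braidSigma n (k+1) * braidSigma n k * braidSigma n (k+1) := by
  have h1 : k - 1 < n - 1 := by omega
  have h2 : k + 1 - 1 < n - 1 := by omega
  unfold braidSigma
  rw [dif_pos h1, dif_pos h2]
  have hmem : FreeGroup.of (⟨k - 1, h1⟩ : Fin (n-1)) * FreeGroup.of (⟨k + 1 - 1, h2⟩ : Fin (n-1)) *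
      FreeGroup.of (⟨k - 1, h1⟩ : Fin (n-1)) *
      (FreeGroup.of (⟨k + 1 - 1, h2⟩ : Fin (n-1)) * FreeGroup.of (⟨k - 1, h1⟩ : Fin (n-1)) *
        FreeGroup.of (⟨k + 1 - 1, h2⟩ : Fin (n-1)))⁻¹ ∈ braidRels n :=
    Or.inl ⟨_, _, by simp; omega, rfl⟩
  have h := rel_one hmem
  simp only [map_mul, map_inv] at h
  exact mul_inv_eq_one.mp h

lemma C_empty (n a b : ℕ) (h : b ≤ a) : C n a b = 1 := by
  unfold C
  rw [Nat.sub_eq_zero_of_le h]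
  simp

lemma C_succ_left (n a b : ℕ) (h : a ≤ b) :
    C n a (b + 1) = braidSigma n b * C n a b := by
  unfold C
  have hl : (List.range (b + 1 - a)).map (fun t => braidSigma n (b + 1 - 1 - t)) =
      braidSigma n b :: (List.range (b - a)).map (fun t => braidSigma n (b - 1 - t)) := by
    rw [show b + 1 - a = (b - a) + 1 by omega, List.range_succ_eq_map, List.map_cons,
      List.map_map]
    refine congrArg₂ _ (by congr 1) ?_
    refine List.map_congr_left fun t ht => ?_
    simp only [Function.comp_apply]
    congr 1
    omega
  rw [hl, List.prod_cons]

lemma C_succ_right (n a b : ℕ) (h : a ≤ b) :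
    C n a (b + 1) = C n (a + 1) (b + 1) * braidSigma n a := by
  unfold C
  rw [show b + 1 - a = (b - a) + 1 by omega, List.range_succ,
    show b + 1 - (a + 1) = b - a by omega]
  simp only [List.map_append, List.prod_append, List.map_cons, List.map_nil,
    List.prod_cons, List.prod_nil, mul_one]
  congr 2
  omega

lemma commC_gen (n : ℕ) (x : BraidGroup n) (a b : ℕ)
    (h : ∀ m, a ≤ m → m < b → Commute x (braidSigma n m)) :
    Commute x (C n a b) := by
  apply Commute.list_prod_right
  intro y hy
  simp only [List.mem_map, List.mem_range] at hy
  obtain ⟨t, ht, rfl⟩ := hy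
  exact h _ (by omega) (by omega)

lemma conjC (n a b k : ℕ) (ha : 1 ≤ a) (hak : a + 1 ≤ k) (hkb : k + 1 ≤ b) (hbn : b ≤ n) :
    C n a b * braidSigma n k = braidSigma n (k - 1) * C n a b := by
  obtain ⟨m, rfl⟩ : ∃ m, b = k + 1 + m := ⟨b - (k + 1), by omega⟩
  clear hkb
  induction m with
  | zero =>
    have h1 : C n a (k + 1) = braidSigma n k * C n a k := C_succ_left n a k (by omega)
    have h2 : C n a k = braidSigma n (k - 1) * C n a (k - 1) := by
      have := C_succ_left n a (k - 1) (by omega)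
      rw [show k - 1 + 1 = k by omega] at this
      exact this
    have hc : Commute (braidSigma n k) (C n a (k - 1)) :=
      commC_gen n _ a (k - 1) (fun m hm1 hm2 => (sigma_comm n m k (by omega) (by omega)).symm)
    have hb : braidSigma n (k-1) * braidSigma n k * braidSigma n (k-1) =
        braidSigma n k * braidSigma n (k-1) * braidSigma n k := by
      have := sigma_braid n (k - 1) (by omega) (by omega)
      rw [show k - 1 + 1 = k by omega] at this
      exact this
    rw [h1, h2]
    simp only [mul_assoc]
    rw [← hc.eq]
    simp only [← mul_assoc]
    rw [← hb]
  | succ m ih =>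
    have key := ih (by omega)
    rw [show k + 1 + (m + 1) = k + 1 + m + 1 from rfl,
      C_succ_left n a (k + 1 + m) (by omega)]
    rw [mul_assoc, key, ← mul_assoc,
      ← (sigma_comm n (k - 1) (k + 1 + m) (by omega) (by omega)).eq, mul_assoc]

lemma shiftC (n A B a b : ℕ) (hA1 : 1 ≤ A) (hAa : A ≤ a) (hbB : b + 1 ≤ B) (hBn : B ≤ n) :
    C n a b * C n A B = C n A B * C n (a + 1) (b + 1) := by
  induction b with
  | zero =>
    rw [C_empty n a 0 (by omega), C_empty n (a + 1) 1 (by omega), one_mul, mul_one]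
  | succ b ih =>
    by_cases hab : a ≤ b
    · have h := conjC n A B (b + 1) hA1 (by omega) (by omega) hBn
      rw [show b + 1 - 1 = b by omega] at h
      rw [C_succ_left n a b hab, mul_assoc, ih (by omega), ← mul_assoc, ← h, mul_assoc,
        ← C_succ_left n (a + 1) (b + 1) (by omega)]
    · rw [C_empty n a (b + 1) (by omega), C_empty n (a + 1) (b + 2) (by omega), one_mul, mul_one]

lemma braidA_eq (n i j : ℕ) :
    braidA n i j = C n (i + 1) j * braidSigma n i ^ 2 * (C n (i + 1) j)⁻¹ := by
  unfold braidA C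
  rw [show j - (i + 1) = j - 1 - i by omega]

lemma sigma_comm_A (n k i j : ℕ) (hi : 1 ≤ i) (hk : max j (i + 1) + 1 ≤ k) :
    Commute (braidSigma n k) (braidA n i j) := by
  rw [braidA_eq]
  have h1 : Commute (braidSigma n k) (C n (i + 1) j) :=
    commC_gen n _ _ _ (fun m hm1 hm2 => (sigma_comm n m k (by omega) (by omega)).symm)
  have h2 : Commute (braidSigma n k) (braidSigma n i ^ 2) :=
    ((sigma_comm n i k hi (by omega)).symm).pow_right 2
  exact (h1.mul_right h2).mul_right h1.inv_right

lemma sigma_comm_A' (n k i j : ℕ) (hk1 : 1 ≤ k) (hk : k + 2 ≤ i) :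
    Commute (braidSigma n k) (braidA n i j) := by
  rw [braidA_eq]
  have h1 : Commute (braidSigma n k) (C n (i + 1) j) :=
    commC_gen n _ _ _ (fun m hm1 hm2 => sigma_comm n k m hk1 (by omega))
  have h2 : Commute (braidSigma n k) (braidSigma n i ^ 2) :=
    (sigma_comm n k i hk1 hk).pow_right 2
  exact (h1.mul_right h2).mul_right h1.inv_right

end BraidAux

open BraidAux in
/-- In the braid group `B_n` (`n ≥ 2`), for `1 ≤ p < q < r < s ≤ n`,
`[a_{pq}, a_{rs}] = 1` and `[a_{ps}, a_{qr}] = 1`. -/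
theorem braid_pure_commutations (n : ℕ) (hn : 2 ≤ n) (p q r s : ℕ)
    (hp : 1 ≤ p) (hpq : p < q) (hqr : q < r) (hrs : r < s) (hs : s ≤ n) :
    braidA n p q * braidA n r s * (braidA n p q)⁻¹ * (braidA n r s)⁻¹ = 1 ∧
    braidA n p s * braidA n q r * (braidA n p s)⁻¹ * (braidA n q r)⁻¹ = 1 := by
  constructor
  · -- disjoint supports
    have key : ∀ m, q + 1 ≤ m → Commute (braidA n p q) (braidSigma n m) := fun m hm =>
      (sigma_comm_A n m p q hp (by omega)).symm
    have hcomm : Commute (braidA n p q) (braidA n r s) := by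
      rw [braidA_eq n r s]
      have h1 : Commute (braidA n p q) (C n (r + 1) s) :=
        commC_gen n _ _ _ (fun m hm1 hm2 => key m (by omega))
      have h2 : Commute (braidA n p q) (braidSigma n r ^ 2) := (key r (by omega)).pow_right 2
      exact (h1.mul_right h2).mul_right h1.inv_right
    rw [hcomm.eq]
    group
  · -- nested supports
    set W := C n (p + 1) s with hWdef
    have hW : braidA n p s = W * braidSigma n p ^ 2 * W⁻¹ := braidA_eq n p s
    have h1 : C n (q + 1) r * W = W * C n (q + 1 + 1) (r + 1) :=
      shiftC n (p + 1) s (q + 1) r (by omega) (by omega) (by omega) (by omega)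
    have h2 : braidSigma n q * W = W * braidSigma n (q + 1) := by
      have h := conjC n (p + 1) s (q + 1) (by omega) (by omega) (by omega) hs
      rw [show q + 1 - 1 = q by omega] at h
      exact h.symm
    have e1 : W * C n (q + 1 + 1) (r + 1) * W⁻¹ = C n (q + 1) r := by
      rw [← h1]; group
    have e2 : W * braidSigma n (q + 1) * W⁻¹ = braidSigma n q := by
      rw [← h2]; group
    have hXeq : braidA n q r = W * braidA n (q + 1) (r + 1) * W⁻¹ := by
      have s1 : SemiconjBy W (C n (q + 1 + 1) (r + 1)) (C n (q + 1) r) := h1.symm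
      have s2 : SemiconjBy W (braidSigma n (q + 1)) (braidSigma n q) := h2.symm
      have total := (s1.mul_right (s2.pow_right 2)).mul_right s1.inv_right
      have heq : W * braidA n (q + 1) (r + 1) = braidA n q r * W := by
        rw [braidA_eq n q r, braidA_eq n (q + 1) (r + 1)]
        exact total
      rw [heq, mul_inv_cancel_right]
    have hx : Commute (braidSigma n p ^ 2) (braidA n (q + 1) (r + 1)) :=
      (sigma_comm_A' n p (q + 1) (r + 1) hp (by omega)).pow_left 2
    have hcomm : Commute (braidA n p s) (braidA n q r) := by
      rw [hW, hXeq]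
      have h := hx.map (MulAut.conj W).toMonoidHom
      simpa [MulAut.conj_apply] using h
    rw [hcomm.eq]
    group
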